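/- Let G and H be non-trivial groups, let H act faithfully on a set X, let y ∈ X and t ∈ H be such that the ⟨t⟩-orbit y⟨t⟩ is infinite, let S_H be a subset of H that invariably generates H, and let 𝒢 be a generating set of the coordinate subgroup G_y. For each s ∈ S_H ∪ 𝒢·t ∪ {t} choose an arbitrary conjugator a_s ∈ G ≀_X H and write S' := {a_s⁻¹·s·a_s : s ∈ S} for S ⊆ G ≀_X H. Then there exists c ∈ ℕ such that the subgroup of G ≀_X H generated by S_H' ∪ (𝒢·t)' ∪ {t}' contains a Γ_{y·t^c}-set. -/

import Mathlib

open Function SemidirectProduct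

/-- A subset `S` invariably generates `K` if replacing each element of `S` by an
arbitrary conjugate always yields a generating set of `K`. -/
def InvariablyGenerates (K : Type*) [Group K] (S : Set K) : Prop :=
  ∀ a : K → K, Subgroup.closure ((fun s => (a s)⁻¹ * s * a s) '' S) = ⊤

/-- `K` is invariably generated if `K` invariably generates itself. -/
def IsIG (K : Type*) [Group K] : Prop :=
  InvariablyGenerates K Set.univ

/-- `K` is finitely invariably generated if some finite subset invariably generates it. -/
def IsFIG (K : Type*) [Group K] : Prop :=
  ∃ S : Set K, S.Finite ∧ InvariablyGenerates K S

/-- The base of the wreath product `G ≀_X H`: the restricted direct product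
`⨁_{x ∈ X} G`, realized as the finitely supported functions `X → G`. -/
def WreathBase (G X : Type*) [Group G] : Subgroup (X → G) where
  carrier := {f | (mulSupport f).Finite}
  one_mem' := by simp
  mul_mem' {f g} hf hg := (Set.Finite.union hf hg).subset (mulSupport_mul f g)
  inv_mem' {f} hf := by simpa using hf

lemma mem_wreathBase {G X : Type*} [Group G] {f : X → G} :
    f ∈ WreathBase G X ↔ (mulSupport f).Finite := Iff.rfl

/-- The permutation action of `H` on the base, `(h • f) x = f (h⁻¹ • x)`, so that in the
wreath product conjugation by `h` (i.e. `h · g^{(x)} · h⁻¹`) sends the coordinate subgroup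
`G_x` to `G_{h • x}`; equivalently `h⁻¹ · g^{(x)} · h = g^{(h⁻¹ • x)}`, which is the
left-action rendering of "conjugation multiplies indices on the right". -/
def wreathAut (G H X : Type*) [Group G] [Group H] [MulAction H X] :
    H →* MulAut (WreathBase G X) where
  toFun h :=
    { toFun := fun f => ⟨fun x => (f : X → G) (h⁻¹ • x),
        mem_wreathBase.mpr (((mem_wreathBase.mp f.2).image (h • ·)).subset
          fun x hx => ⟨h⁻¹ • x, hx, by simp⟩)⟩
      invFun := fun f => ⟨fun x => (f : X → G) (h • x),
        mem_wreathBase.mpr (((mem_wreathBase.mp f.2).image (h⁻¹ • ·)).subset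
          fun x hx => ⟨h • x, hx, by simp⟩)⟩
      left_inv := fun f => Subtype.ext (funext fun x => by simp)
      right_inv := fun f => Subtype.ext (funext fun x => by simp)
      map_mul' := fun f g => Subtype.ext (funext fun x => by simp) }
  map_one' := by
    ext f x
    simp
  map_mul' h₁ h₂ := by
    ext f x
    simp [mul_smul]

/-- The restricted wreath product `G ≀_X H`. -/
abbrev WreathProduct (G H X : Type*) [Group G] [Group H] [MulAction H X] :=
  WreathBase G X ⋊[wreathAut G H X] H

open scoped Classical in
/-- `g^{(y)}`: the element of the base which is `g` in coordinate `y` and trivial elsewhere. -/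
noncomputable def WreathBase.single {G : Type*} (X : Type*) [Group G] (y : X) :
    G →* WreathBase G X where
  toFun g := ⟨fun x => if x = y then g else 1,
    mem_wreathBase.mpr ((Set.finite_singleton y).subset fun x hx => by
      by_contra hxy
      exact hx (if_neg hxy))⟩
  map_one' := Subtype.ext (funext fun x => by simp)
  map_mul' g₁ g₂ := Subtype.ext (funext fun x => by by_cases h : x = y <;> simp [h])

/-- The embedding of `G` onto the coordinate subgroup `G_y` of the wreath product. -/
noncomputable def coordHom (G H : Type*) {X : Type*} [Group G] [Group H] [MulAction H X]
    (y : X) : G →* WreathProduct G H X :=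
  SemidirectProduct.inl.comp (WreathBase.single X y)

/-- `H_X` is of torsion-type if there is `y ∈ X` such that for every `x` in the `H`-orbit
of `y` and every `k ∈ H`, the `⟨k⟩`-orbit of `x` is finite. -/
def IsTorsionType (H X : Type*) [Group H] [MulAction H X] : Prop :=
  ∃ y : X, ∀ x ∈ MulAction.orbit H y, ∀ k : H, (Set.range fun n : ℤ => k ^ n • x).Finite

/-- A `Γ_z`-set: a set of base elements containing, for every `g ∈ G`, an element whose
coordinate at `z` is `g`. -/
def IsGammaSet {G X : Type*} [Group G] (z : X) (Γ : Set (WreathBase G X)) : Prop :=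
  ∀ g : G, ∃ f ∈ Γ, (f : X → G) z = g


section AuxStmt19
variable {G H X : Type*} [Group G] [Group H] [MulAction H X]

lemma wreathAut_apply' (h : H) (f : WreathBase G X) (x : X) :
    ((wreathAut G H X h f : WreathBase G X) : X → G) x = (f : X → G) (h⁻¹ • x) := rfl

open scoped Classical in
lemma single_apply' (y : X) (g : G) (x : X) :
    ((WreathBase.single X y g : WreathBase G X) : X → G) x = if x = y then g else 1 := rfl

lemma periodic_finite {Y : Type*} {f : ℤ → Y} {c : ℤ} (hf : Function.Periodic f c)
    (hc : c ≠ 0) : (Set.range f).Finite := by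
  wlog hpos : 0 < c generalizing c
  · exact this hf.neg (neg_ne_zero.mpr hc) (by omega)
  have hsub : Set.range f ⊆ f '' Set.Ico 0 c := by
    rintro _ ⟨x, rfl⟩
    obtain ⟨y, hy, he⟩ := hf.exists_mem_Ico₀ hpos x
    exact ⟨y, hy, he.symm⟩
  exact ((Set.finite_Ico 0 c).image f).subset hsub

lemma conj_right' (A M : WreathProduct G H X) (hA : A.right = 1) :
    (A⁻¹ * M * A).right = M.right := by
  simp [hA]

lemma conj_left_apply (A M : WreathProduct G H X) (hA : A.right = 1) (x : X) :
    ((((A⁻¹ * M * A).left : WreathBase G X)) : X → G) x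
      = (((A.left : WreathBase G X) : X → G) x)⁻¹ * ((M.left : WreathBase G X) : X → G) x
        * ((A.left : WreathBase G X) : X → G) (M.right⁻¹ • x) := by
  simp [mul_left, inv_left, hA, wreathAut_apply', mul_assoc]

lemma mulinv_right (u v : WreathProduct G H X) (h : v.right = u.right) :
    (u * v⁻¹).right = 1 := by simp [h]

lemma mulinv_left_apply (u v : WreathProduct G H X) (h : v.right = u.right) (x : X) :
    (((u * v⁻¹).left : WreathBase G X) : X → G) x
      = ((u.left : WreathBase G X) : X → G) x * ((((v.left : WreathBase G X) : X → G) x)⁻¹) := by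
  simp [mul_left, inv_left, wreathAut_apply', h, smul_smul]

lemma invmul_left_apply (u v : WreathProduct G H X) (hu : u.right = 1) (x : X) :
    (((u⁻¹ * v).left : WreathBase G X) : X → G) x
      = (((u.left : WreathBase G X) : X → G) x)⁻¹ * ((v.left : WreathBase G X) : X → G) x := by
  simp [mul_left, inv_left, hu, wreathAut_apply']

lemma right_pow (w : WreathProduct G H X) (n : ℕ) : (w ^ n).right = w.right ^ n := by
  induction n with
  | zero => simp
  | succ n ih => rw [pow_succ, pow_succ, mul_right, ih]

lemma P_pow_right (s : WreathBase G X) (t : H) (n : ℕ) :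
    ((inl s * inr t : WreathProduct G H X) ^ n).right = t ^ n := by
  rw [right_pow]; simp

lemma P_left (s : WreathBase G X) (t : H) :
    ((inl s * inr t : WreathProduct G H X)).left = s := by
  simp

lemma P_pow_left_pos (t : H) (y z : X) (g : G) (hz : ∀ i : ℕ, (t ^ i)⁻¹ • z ≠ y) (n : ℕ) :
    ((((inl (WreathBase.single X y g) * inr t) : WreathProduct G H X) ^ n).left : X → G) z
      = 1 := by
  induction n with
  | zero => simp
  | succ n ih =>
    rw [pow_succ, mul_left]
    have h1 : ((inl (WreathBase.single X y g) * inr t : WreathProduct G H X)).left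
        = WreathBase.single X y g := P_left _ _
    rw [h1, P_pow_right]
    classical
    simp only [Subgroup.coe_mul, Pi.mul_apply, ih, one_mul, wreathAut_apply', single_apply']
    exact if_neg (hz n)

lemma P_pow_left_neg (t : H) (y z : X) (g : G) (c : ℕ) (hc : 1 ≤ c)
    (hz : ∀ i : ℕ, t ^ i • z = y ↔ i = c) (n : ℕ) :
    ((((inl (WreathBase.single X y g) * inr t)⁻¹ : WreathProduct G H X) ^ n).left : X → G) z
      = if c ≤ n then g⁻¹ else 1 := by
  have hqr : ((inl (WreathBase.single X y g) * inr t : WreathProduct G H X)⁻¹).right = t⁻¹ := by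
    simp
  have hql : ((inl (WreathBase.single X y g) * inr t : WreathProduct G H X)⁻¹).left
      = wreathAut G H X t⁻¹ ((WreathBase.single X y g)⁻¹) := by
    rw [inv_left, P_left]; simp
  induction n with
  | zero => rw [if_neg (by omega)]; simp
  | succ n ih =>
    rw [pow_succ, mul_left, right_pow, hqr, hql]
    classical
    simp only [Subgroup.coe_mul, Pi.mul_apply, ih, wreathAut_apply']
    have harg : (t⁻¹)⁻¹ • ((t⁻¹ ^ n)⁻¹ • z) = t ^ (n+1) • z := by
      rw [inv_pow, inv_inv, inv_inv, smul_smul, ← pow_succ']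
    rw [harg]
    simp only [InvMemClass.coe_inv, Pi.inv_apply, single_apply']
    by_cases hcn : n + 1 = c
    · rw [if_pos ((hz (n+1)).mpr hcn), if_neg (by omega), if_pos (by omega), one_mul]
    · rw [if_neg (fun h => hcn ((hz (n+1)).mp h))]
      by_cases hle : c ≤ n
      · rw [if_pos hle, if_pos (by omega), inv_one, mul_one]
      · rw [if_neg hle, if_neg (by omega)]; simp

end AuxStmt19

theorem stmt_19 (G H X : Type*) [Group G] [Group H] [Nontrivial G] [Nontrivial H]
    [MulAction H X] [FaithfulSMul H X]
    (y : X) (t : H) (ht : (Set.range fun n : ℤ => t ^ n • y).Infinite)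
    (S_H : Set H) (hS : InvariablyGenerates H S_H)
    (𝒢 : Set G) (h𝒢 : Subgroup.closure 𝒢 = ⊤)
    (aS : H → WreathProduct G H X) (aGt : G → WreathProduct G H X)
    (aT : WreathProduct G H X) :
    ∃ (c : ℕ) (Γ : Set (WreathBase G X)),
      IsGammaSet ((t ^ c)⁻¹ • y) Γ ∧
        (fun f => (inl f : WreathProduct G H X)) '' Γ ⊆
          ((Subgroup.closure
            (((fun s => (aS s)⁻¹ * inr s * aS s) '' S_H) ∪
              ((fun g => (aGt g)⁻¹ * (coordHom G H y g * inr t) * aGt g) '' 𝒢) ∪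
              {aT⁻¹ * inr t * aT}) : Subgroup (WreathProduct G H X)) :
            Set (WreathProduct G H X)) := by
  classical
  set gens : Set (WreathProduct G H X) :=
    ((fun s => (aS s)⁻¹ * inr s * aS s) '' S_H) ∪
      ((fun g => (aGt g)⁻¹ * (coordHom G H y g * inr t) * aGt g) '' 𝒢) ∪
      {aT⁻¹ * inr t * aT} with hgens
  set L : Subgroup (WreathProduct G H X) := Subgroup.closure gens with hLdef
  -- injectivity of the orbit map
  have hinj : Function.Injective (fun n : ℤ => t ^ n • y) := by
    intro a b hab
    by_contra hne
    refine ht (periodic_finite (f := fun n : ℤ => t ^ n • y) (c := b - a) ?_ (by omega))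
    have hab' : t ^ a • y = t ^ b • y := hab
    have h1 : t ^ (b - a) • y = y := by
      have hba : (b - a : ℤ) = -a + b := by ring
      rw [hba, zpow_add, mul_smul, ← hab', ← mul_smul, ← zpow_add, neg_add_cancel,
        zpow_zero, one_smul]
    intro n
    simp only
    rw [zpow_add, mul_smul, h1]
  have horb : ∀ a b : ℤ, t ^ a • y = t ^ b • y ↔ a = b :=
    fun a b => ⟨fun h => hinj h, fun h => by rw [h]⟩
  have epow : ∀ (i : ℕ) (x : X), (t ^ i)⁻¹ • x = t ^ (-(i : ℤ)) • x := fun i x => by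
    rw [← zpow_natCast t i, ← zpow_neg]
  have epows : ∀ (i : ℕ) (x : X), t ^ i • x = t ^ ((i : ℤ)) • x := fun i x => by
    rw [← zpow_natCast t i]
  have eadd : ∀ (a b : ℤ) (x : X), t ^ a • t ^ b • x = t ^ (a + b) • x := fun a b x => by
    rw [← mul_smul, ← zpow_add]
  -- L surjects onto H
  have hmap : Subgroup.map (rightHom : WreathProduct G H X →* H) L = ⊤ := by
    rw [eq_top_iff, ← hS (fun s => rightHom (aS s)), Subgroup.closure_le]
    rintro x ⟨s, hs, rfl⟩
    have hmem : (aS s)⁻¹ * inr s * aS s ∈ L :=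
      Subgroup.subset_closure (Or.inl (Or.inl ⟨s, hs, rfl⟩))
    have h2 : rightHom ((aS s)⁻¹ * inr s * aS s)
        = (rightHom (aS s))⁻¹ * s * rightHom (aS s) := by
      simp
    exact ⟨_, hmem, h2⟩
  have hlift : ∀ h : H, ∃ ℓ ∈ L, rightHom ℓ = h := by
    intro h
    have hmem : h ∈ Subgroup.map (rightHom : WreathProduct G H X →* H) L := by
      rw [hmap]; trivial
    obtain ⟨ℓ, hℓ, he⟩ := hmem
    exact ⟨ℓ, hℓ, he⟩
  -- the fixed conjugate of t with base-conjugator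
  obtain ⟨σ, hσL, hσ⟩ := hlift (rightHom aT)⁻¹
  have hBr : (aT * σ).right = 1 := by
    have h1 : rightHom (aT * σ) = 1 := by rw [map_mul, hσ, mul_inv_cancel]
    exact h1
  set E : WreathBase G X := (aT * σ).left with hE
  set w1 : WreathProduct G H X := (aT * σ)⁻¹ * inr t * (aT * σ) with hw1
  have hw1L : w1 ∈ L := by
    have hT : aT⁻¹ * inr t * aT ∈ L := Subgroup.subset_closure (Or.inr rfl)
    have heq : w1 = σ⁻¹ * (aT⁻¹ * inr t * aT) * σ := by rw [hw1]; group
    rw [heq]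
    exact mul_mem (mul_mem (inv_mem hσL) hT) hσL
  have hw1pow : ∀ k : ℕ, w1 ^ k = (aT * σ)⁻¹ * inr (t ^ k) * (aT * σ) := by
    intro k
    rw [hw1, show (aT*σ)⁻¹ * inr t * (aT*σ) = (aT*σ)⁻¹ * inr t * ((aT*σ)⁻¹)⁻¹ by rw [inv_inv],
      conj_pow, inv_inv, map_pow]
  have hw1inv : w1⁻¹ = (aT * σ)⁻¹ * (inr t)⁻¹ * (aT * σ) := by rw [hw1]; group
  have hw1ipow : ∀ k : ℕ, (w1⁻¹) ^ k = (aT * σ)⁻¹ * inr ((t⁻¹) ^ k) * (aT * σ) := by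
    intro k
    rw [hw1inv, show (aT*σ)⁻¹ * (inr t)⁻¹ * (aT*σ)
        = (aT*σ)⁻¹ * (inr t)⁻¹ * ((aT*σ)⁻¹)⁻¹ by rw [inv_inv],
      conj_pow, inv_inv, map_pow, map_inv]
  -- choice of c
  have hsuppE : (mulSupport (E : X → G)).Finite := E.2
  have hψc : Function.Injective (fun i : ℕ => (t ^ i)⁻¹ • y) := by
    intro a b hab
    simp only at hab
    rw [epow a, epow b] at hab
    have := (horb _ _).mp hab
    omega
  have hbadc : (((fun i : ℕ => (t ^ i)⁻¹ • y) ⁻¹' mulSupport (E : X → G)) ∪ {0}).Finite :=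
    (hsuppE.preimage hψc.injOn).union (Set.finite_singleton 0)
  obtain ⟨c, hc⟩ := hbadc.infinite_compl.nonempty
  have hc0 : 1 ≤ c := by
    rcases Nat.eq_zero_or_pos c with h | h
    · exact absurd (Or.inr (by simp [h])) hc
    · omega
  have hcE : (E : X → G) ((t ^ c)⁻¹ • y) = 1 :=
    notMem_mulSupport.mp (fun h => hc (Or.inl h))
  set z : X := (t ^ c)⁻¹ • y with hz
  -- orbit facts about z
  have hz_pos : ∀ i : ℕ, (t ^ i)⁻¹ • z ≠ y := by
    intro i h
    rw [hz, epow i, epow c, eadd] at h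
    have h2 : t ^ (-(i : ℤ) + -(c : ℤ)) • y = t ^ (0 : ℤ) • y := by
      rw [h, zpow_zero, one_smul]
    have := (horb _ _).mp h2
    omega
  have hz_iff : ∀ i : ℕ, t ^ i • z = y ↔ i = c := by
    intro i
    rw [hz, epows i, epow c, eadd]
    constructor
    · intro h
      have h2 : t ^ ((i : ℤ) + -(c : ℤ)) • y = t ^ (0 : ℤ) • y := by
        rw [h, zpow_zero, one_smul]
      have := (horb _ _).mp h2
      omega
    · intro h
      subst h
      rw [show ((i : ℤ) + -(i : ℤ)) = 0 by ring, zpow_zero, one_smul]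
  -- the subgroup of base elements of L and evaluation at z
  set N' : Subgroup (WreathBase G X) :=
    Subgroup.comap (inl : WreathBase G X →* WreathProduct G H X) L with hN'
  set ev : N' →* G := (Pi.evalMonoidHom (fun _ : X => G) z).comp
      ((WreathBase G X).subtype.comp N'.subtype) with hevdef
  have hrange : 𝒢 ⊆ (ev.range : Set G) := by
    intro g hg
    obtain ⟨ρ, hρL, hρ⟩ := hlift (rightHom (aGt g))⁻¹
    have hAr : (aGt g * ρ).right = 1 := by
      have h1 : rightHom (aGt g * ρ) = 1 := by rw [map_mul, hρ, mul_inv_cancel]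
      exact h1
    set A : WreathProduct G H X := aGt g * ρ with hA
    set F : WreathBase G X := A.left with hF
    set s0 : WreathBase G X := WreathBase.single X y g with hs0
    set p : WreathProduct G H X := inl s0 * inr t with hp
    have hvL : (aGt g)⁻¹ * (coordHom G H y g * inr t) * aGt g ∈ L :=
      Subgroup.subset_closure (Or.inl (Or.inr ⟨g, hg, rfl⟩))
    set V : WreathProduct G H X := A⁻¹ * p * A with hV
    have hVL : V ∈ L := by
      have hco : coordHom G H y g = inl s0 := rfl
      have heq : V = ρ⁻¹ * ((aGt g)⁻¹ * (coordHom G H y g * inr t) * aGt g) * ρ := by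
        rw [hV, hA, hp, hco]; group
      rw [heq]
      exact mul_mem (mul_mem (inv_mem hρL) hvL) hρL
    have hVpow : ∀ k : ℕ, V ^ k = A⁻¹ * p ^ k * A := by
      intro k
      rw [hV, show A⁻¹ * p * A = A⁻¹ * p * (A⁻¹)⁻¹ by rw [inv_inv], conj_pow, inv_inv]
    have hVinv : V⁻¹ = A⁻¹ * p⁻¹ * A := by rw [hV]; group
    have hVipow : ∀ k : ℕ, (V⁻¹) ^ k = A⁻¹ * (p⁻¹) ^ k * A := by
      intro k
      rw [hVinv, show A⁻¹ * p⁻¹ * A = A⁻¹ * p⁻¹ * (A⁻¹)⁻¹ by rw [inv_inv], conj_pow, inv_inv]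
    have hsuppF : (mulSupport (F : X → G)).Finite := F.2
    have hψn : Function.Injective (fun i : ℕ => (t ^ i)⁻¹ • z) := by
      intro a b hab
      have hab2 : (t ^ a)⁻¹ • z = (t ^ b)⁻¹ • z := hab
      rw [hz, epow a, epow c, epow b, eadd, eadd] at hab2
      have := (horb _ _).mp hab2
      omega
    have hψm : Function.Injective (fun i : ℕ => t ^ i • z) := by
      intro a b hab
      have hab2 : t ^ a • z = t ^ b • z := hab
      rw [hz, epows a, epows b, epow c, eadd, eadd] at hab2
      have := (horb _ _).mp hab2
      omega
    have hbadn : ((fun i : ℕ => (t ^ i)⁻¹ • z) ⁻¹'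
        (mulSupport (F : X → G) ∪ mulSupport (E : X → G))).Finite :=
      (hsuppF.union hsuppE).preimage hψn.injOn
    obtain ⟨n, hn⟩ := hbadn.infinite_compl.nonempty
    have hnF : (F : X → G) ((t ^ n)⁻¹ • z) = 1 :=
      notMem_mulSupport.mp (fun h => hn (Or.inl h))
    have hnE : (E : X → G) ((t ^ n)⁻¹ • z) = 1 :=
      notMem_mulSupport.mp (fun h => hn (Or.inr h))
    have hbadm : (((fun i : ℕ => t ^ i • z) ⁻¹'
        (mulSupport (F : X → G) ∪ mulSupport (E : X → G))) ∪ Set.Iio c).Finite :=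
      ((hsuppF.union hsuppE).preimage hψm.injOn).union (Set.finite_Iio c)
    obtain ⟨m, hm⟩ := hbadm.infinite_compl.nonempty
    have hmc : c ≤ m := by
      by_contra h
      exact hm (Or.inr (Set.mem_Iio.mpr (by omega)))
    have hmF : (F : X → G) (t ^ m • z) = 1 :=
      notMem_mulSupport.mp (fun h => hm (Or.inl (Or.inl h)))
    have hmE : (E : X → G) (t ^ m • z) = 1 :=
      notMem_mulSupport.mp (fun h => hm (Or.inl (Or.inr h)))
    have hcE' : (E : X → G) z = 1 := by rw [hz]; exact hcE
    have hVnr : (V ^ n).right = t ^ n := by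
      rw [hVpow, conj_right' _ _ hAr, hp, P_pow_right]
    have hw1nr : ∀ k : ℕ, (w1 ^ k).right = t ^ k := by
      intro k
      rw [hw1pow, conj_right' _ _ hBr, right_inr]
    have hw1inr : ∀ k : ℕ, ((w1⁻¹) ^ k).right = (t⁻¹) ^ k := by
      intro k
      rw [hw1ipow, conj_right' _ _ hBr, right_inr]
    have hVmr : ((V⁻¹) ^ m).right = (t⁻¹) ^ m := by
      rw [hVipow, conj_right' _ _ hAr, right_pow, inv_right, hp]
      simp
    set u1 : WreathProduct G H X := V ^ n * (w1 ^ n)⁻¹ with hu1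
    have hu1L : u1 ∈ L := mul_mem (pow_mem hVL n) (inv_mem (pow_mem hw1L n))
    have hu1r : u1.right = 1 := mulinv_right _ _ (by rw [hVnr, hw1nr])
    have hu1val : ((u1.left : WreathBase G X) : X → G) z = (((F : X → G)) z)⁻¹ := by
      rw [hu1, mulinv_left_apply _ _ (by rw [hVnr, hw1nr]) z, hVpow,
        conj_left_apply _ _ hAr z, hw1pow, conj_left_apply _ _ hBr z]
      rw [hp, hs0, P_pow_right, P_pow_left_pos t y z g hz_pos n, left_inr, right_inr,
        hnF, hcE', hnE]
      simp
      rfl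
    set u2 : WreathProduct G H X := (V⁻¹) ^ m * ((w1⁻¹) ^ m)⁻¹ with hu2
    have hu2L : u2 ∈ L :=
      mul_mem (pow_mem (inv_mem hVL) m) (inv_mem (pow_mem (inv_mem hw1L) m))
    have hu2r : u2.right = 1 := mulinv_right _ _ (by rw [hVmr, hw1inr])
    have hsmul_m : ((t⁻¹ ^ m)⁻¹ : H) • z = t ^ m • z := by rw [inv_pow, inv_inv]
    have hu2val : ((u2.left : WreathBase G X) : X → G) z = (((F : X → G)) z)⁻¹ * g⁻¹ := by
      rw [hu2, mulinv_left_apply _ _ (by rw [hVmr, hw1inr]) z, hVipow,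
        conj_left_apply _ _ hAr z, hw1ipow, conj_left_apply _ _ hBr z]
      rw [right_pow, inv_right, hp, hs0]
      rw [P_pow_left_neg t y z g c hc0 hz_iff m, if_pos hmc]
      rw [left_inr, right_inr]
      simp only [mul_right, right_inl, right_inr, one_mul]
      rw [hsmul_m, hmF, hmE, hcE']
      simp
      rfl
    set u3 : WreathProduct G H X := u2⁻¹ * u1 with hu3
    have hu3L : u3 ∈ L := mul_mem (inv_mem hu2L) hu1L
    have hu3r : u3.right = 1 := by rw [hu3, mul_right, inv_right, hu2r, hu1r]; simp
    have hu3val : ((u3.left : WreathBase G X) : X → G) z = g := by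
      rw [hu3, invmul_left_apply _ _ hu2r z, hu1val, hu2val]
      group
    have hinlu3 : inl u3.left = u3 := by
      conv_rhs => rw [← inl_left_mul_inr_right u3]
      rw [hu3r, map_one, mul_one]
    exact ⟨⟨u3.left, Subgroup.mem_comap.mpr (by rw [hinlu3]; exact hu3L)⟩, hu3val⟩

  have hsurj : Function.Surjective ev := by
    rw [← MonoidHom.range_eq_top, eq_top_iff, ← h𝒢]
    exact Subgroup.closure_le _ |>.mpr hrange
  refine ⟨c, (N' : Set (WreathBase G X)), ?_, ?_⟩
  · intro g
    obtain ⟨⟨f, hf⟩, hfe⟩ := hsurj g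
    exact ⟨f, hf, hfe⟩
  · rintro w ⟨f, hf, rfl⟩
    exact hf
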